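/- Non-associativity of date-period addition: it is not the case that for all valid dates D and periods P1, P2, (D +P P1) +P P2 = D +P (P1 + P2), where P1 + P2 is componentwise addition of periods. In particular, for D = (2020, 2, 29), P1 = (1, 0, 0), and P2 = (0, 1, 0), we have (D +P P1) +P P2 = (2021, 3, 28) while D +P (P1 + P2) = D +P (1, 1, 0) = (2021, 3, 29). -/
import Mathlib


/-- A date is a triple of integers (year, month, day). -/
structure Date where
  y : ℤ
  m : ℤ
  d : ℤ

/-- A year is a leap year iff divisible by 4 and (not by 100, or by 400). -/
def isLeap (y : ℤ) : Prop :=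
  y % 4 = 0 ∧ (y % 100 ≠ 0 ∨ y % 400 = 0)

/-- Number of days in month `m` of year `y`. -/
def nbdays (y m : ℤ) : ℤ :=
  if m = 4 ∨ m = 6 ∨ m = 9 ∨ m = 11 then 30
  else if m = 2 then
    (if y % 4 = 0 ∧ (y % 100 ≠ 0 ∨ y % 400 = 0) then 29 else 28)
  else 31

/-- A date is valid iff `1 ≤ m ≤ 12` and `1 ≤ d ≤ nbdays y m`. -/
def Date.valid (D : Date) : Prop :=
  1 ≤ D.m ∧ D.m ≤ 12 ∧ 1 ≤ D.d ∧ D.d ≤ nbdays D.y D.m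

/-- Month addition `(y, m, d) +m n`, with round-down of the day component. -/
def addMonths (D : Date) (n : ℤ) : Date :=
  ⟨D.y + (D.m - 1 + n) / 12,
   1 + (D.m - 1 + n) % 12,
   min D.d (nbdays (D.y + (D.m - 1 + n) / 12) (1 + (D.m - 1 + n) % 12))⟩

/-- A configuration of the small-step day-addition machine:
either a pending addition `D +D n`, or a finished date. -/
inductive Conf where
  | pending (D : Date) (n : ℤ)
  | done (D : Date)

/-- Small-step rules for day addition `+D`. -/
inductive Step : Conf → Conf → Prop where
  | add_days {y m d n : ℤ}
      (h1 : 1 ≤ d + n) (h2 : d + n ≤ nbdays y m) :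
      Step (Conf.pending ⟨y, m, d⟩ n) (Conf.done ⟨y, m, d + n⟩)
  | add_days_over {y m d n : ℤ}
      (h : d + n > nbdays y m) :
      Step (Conf.pending ⟨y, m, d⟩ n)
        (Conf.pending (addMonths ⟨y, m, 1⟩ 1) (n - (nbdays y m - d) - 1))
  | add_days_under1 {y m d n : ℤ}
      (h1 : 1 < d) (h2 : d + n ≤ 0) :
      Step (Conf.pending ⟨y, m, d⟩ n) (Conf.pending ⟨y, m, 1⟩ (d - 1 + n))
  | add_days_under2 {y m n y' m' : ℤ}
      (h1 : 1 + n ≤ 0) (h2 : addMonths ⟨y, m, 1⟩ (-1) = ⟨y', m', 1⟩) :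
      Step (Conf.pending ⟨y, m, 1⟩ n) (Conf.pending ⟨y', m', 1⟩ (n + nbdays y' m'))

/-- Reduction in finitely many steps. -/
def Reduces : Conf → Conf → Prop := Relation.ReflTransGen Step

instance : Nonempty Date := ⟨⟨2000, 3, 1⟩⟩

/-- `addDays D n` is the unique valid normal form of `D +D n`
(when it exists; arbitrary otherwise). -/
noncomputable def addDays (D : Date) (n : ℤ) : Date :=
  Classical.epsilon fun D' : Date =>
    D'.valid ∧ Reduces (Conf.pending D n) (Conf.done D')

/-- Date-period addition `D +P (ny, nm, nd) = (D +m (12·ny + nm)) +D nd`. -/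
noncomputable def addPeriod (D : Date) (P : ℤ × ℤ × ℤ) : Date :=
  addDays (addMonths D (12 * P.1 + P.2.1)) P.2.2

/-- Lexicographic order on dates. -/
def Date.le (a b : Date) : Prop :=
  a.y < b.y ∨ (a.y = b.y ∧ a.m < b.m) ∨ (a.y = b.y ∧ a.m = b.m ∧ a.d ≤ b.d)

/-- Strict lexicographic order on dates. -/
def Date.lt (a b : Date) : Prop :=
  a.y < b.y ∨ (a.y = b.y ∧ a.m < b.m) ∨ (a.y = b.y ∧ a.m = b.m ∧ a.d < b.d)

/-- The epoch date: March 1, 2000. -/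
def epoch : Date := ⟨2000, 3, 1⟩

/-- `toDelta D` is the unique integer `n` with `epoch +D n = D`
(when it exists; arbitrary otherwise). -/
noncomputable def toDelta (D : Date) : ℤ :=
  Classical.epsilon fun n : ℤ => addDays epoch n = D

lemma nbdays_ge (y m : ℤ) : 28 ≤ nbdays y m := by
  unfold nbdays; split_ifs <;> norm_num

lemma step_det {c c1 c2 : Conf} (h1 : Step c c1) (h2 : Step c c2) : c1 = c2 := by
  cases h1 with
  | @add_days y m d n ha hb =>
    cases h2 with
    | add_days _ _ => rfl
    | add_days_over h => omega
    | add_days_under1 h1 h2 => omega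
    | add_days_under2 h1 h2 => omega
  | @add_days_over y m d n h =>
    have := nbdays_ge y m
    cases h2 with
    | add_days ha hb => omega
    | add_days_over _ => rfl
    | add_days_under1 h1 h2 => omega
    | add_days_under2 h1 h2 => omega
  | @add_days_under1 y m d n ha hb =>
    have := nbdays_ge y m
    cases h2 with
    | add_days h1 h2 => omega
    | add_days_over h => omega
    | add_days_under1 _ _ => rfl
    | add_days_under2 h1 h2 => omega
  | @add_days_under2 y m n y' m' ha hb =>
    cases h2 with
    | add_days h1 h2 => omega
    | add_days_over h => have := nbdays_ge y m; omega
    | add_days_under1 h1 h2 => omega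
    | @add_days_under2 _ _ _ y'' m'' h1 h2 =>
      rw [hb] at h2
      injection h2 with e1 e2 e3
      subst e1; subst e2; rfl

lemma no_step_done {D : Date} {c : Conf} (h : Step (Conf.done D) c) : False := by
  cases h

lemma reduces_done_unique {c : Conf} {A B : Date}
    (h1 : Reduces c (Conf.done A)) (h2 : Reduces c (Conf.done B)) : A = B := by
  induction h1 using Relation.ReflTransGen.head_induction_on with
  | refl =>
    rcases Relation.ReflTransGen.cases_head h2 with h | ⟨c', hs, _⟩
    · cases h; rfl
    · exact absurd hs no_step_done
  | head hs _ ih =>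
    rcases Relation.ReflTransGen.cases_head h2 with h | ⟨c', hs', hr'⟩
    · subst h; exact absurd hs no_step_done
    · exact ih (step_det hs hs' ▸ hr')

lemma addDays_eq {D D' : Date} {n : ℤ} (hv : D'.valid)
    (hr : Reduces (Conf.pending D n) (Conf.done D')) : addDays D n = D' := by
  have hspec := Classical.epsilon_spec (p := fun X : Date =>
    X.valid ∧ Reduces (Conf.pending D n) (Conf.done X)) ⟨D', hv, hr⟩
  exact reduces_done_unique hspec.2 hr

lemma addDays_zero {D : Date} (hv : D.valid) : addDays D 0 = D := by
  refine addDays_eq hv ?_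
  obtain ⟨y, m, d⟩ := D
  simp only [Date.valid] at hv
  obtain ⟨-, -, h1, h2⟩ := hv
  rw [show (Conf.done ⟨y, m, d⟩) = Conf.done ⟨y, m, d + 0⟩ by norm_num]
  exact Relation.ReflTransGen.single (Step.add_days (by omega) (by omega))

/-- **Non-associativity of date-period addition**: it is not the case that
`(D +P P1) +P P2 = D +P (P1 + P2)` (componentwise sum of periods) for all valid dates
`D` and periods `P1, P2`; in particular, for `D = (2020, 2, 29)`, `P1 = (1, 0, 0)`,
`P2 = (0, 1, 0)` the left side is `(2021, 3, 28)` while the right side is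
`(2021, 3, 29)`. -/
theorem addPeriod_not_associative :
    (¬ ∀ (D : Date) (P1 P2 : ℤ × ℤ × ℤ), D.valid →
      addPeriod (addPeriod D P1) P2 = addPeriod D (P1 + P2)) ∧
    addPeriod (addPeriod ⟨2020, 2, 29⟩ (1, 0, 0)) (0, 1, 0) = ⟨2021, 3, 28⟩ ∧
    addPeriod ⟨2020, 2, 29⟩ ((1, 0, 0) + (0, 1, 0)) = ⟨2021, 3, 29⟩ := by
  have h1 : addPeriod ⟨2020, 2, 29⟩ (1, 0, 0) = ⟨2021, 2, 28⟩ := by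
    show addDays (addMonths ⟨2020, 2, 29⟩ (12 * 1 + 0)) 0 = _
    have : addMonths ⟨2020, 2, 29⟩ (12 * 1 + 0) = ⟨2021, 2, 28⟩ := by
      norm_num [addMonths, nbdays]
    rw [this]; exact addDays_zero (by norm_num [Date.valid, nbdays])
  have h2 : addPeriod ⟨2021, 2, 28⟩ (0, 1, 0) = ⟨2021, 3, 28⟩ := by
    show addDays (addMonths ⟨2021, 2, 28⟩ (12 * 0 + 1)) 0 = _
    have : addMonths ⟨2021, 2, 28⟩ (12 * 0 + 1) = ⟨2021, 3, 28⟩ := by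
      norm_num [addMonths, nbdays]
    rw [this]; exact addDays_zero (by norm_num [Date.valid, nbdays])
  have h3 : addPeriod ⟨2020, 2, 29⟩ ((1, 0, 0) + (0, 1, 0)) = ⟨2021, 3, 29⟩ := by
    show addDays (addMonths ⟨2020, 2, 29⟩ (12 * 1 + 1)) 0 = _
    have : addMonths ⟨2020, 2, 29⟩ (12 * 1 + 1) = ⟨2021, 3, 29⟩ := by
      norm_num [addMonths, nbdays]
    rw [this]; exact addDays_zero (by norm_num [Date.valid, nbdays])
  refine ⟨fun h => ?_, by rw [h1, h2], h3⟩
  have := h ⟨2020, 2, 29⟩ (1, 0, 0) (0, 1, 0) (by norm_num [Date.valid, nbdays])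
  rw [h1, h2, h3] at this
  simp [Date.mk.injEq] at this
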